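/- Let A ∈ M_d(K) be a nilpotent matrix over a field K, with Jordan block sizes k_1 ≥ ... ≥ k_m ≥ 1. Then the centralizer Cen(A) is isomorphic as a K-algebra to the algebra C_A of m×m matrices whose (i,j) entry lies in z^{l_{i,j}}·K[z]/(z^{k_i}), where l_{i,j} = max(k_i - k_j, 0), with the natural matrix operations. -/

import Mathlib

open Polynomial

/-- The algebra of `m × m` matrices over `K[z]` whose `(i,j)` entry is divisible by
`z ^ (k i - k j)` (truncated subtraction, i.e. `z ^ max (k i - k j) 0`).  The algebra
`C_A` of the statement is the quotient of `NX k` by the set of matrices whose `(i,j)`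
entry is divisible by `z ^ k i` (row-wise reduction modulo `z ^ k i`). -/
def NX {K : Type*} [Field K] {m : ℕ} (k : Fin m → ℕ) :
    Subalgebra K (Matrix (Fin m) (Fin m) (Polynomial K)) where
  carrier := {P | ∀ i j, (X : Polynomial K) ^ (k i - k j) ∣ P i j}
  mul_mem' := by
    intro P Q hP hQ i j
    have : ∀ t : Fin m, (X : Polynomial K) ^ (k i - k j) ∣ P i t * Q t j := by
      intro t
      have h1 := hP i t
      have h2 := hQ t j
      have hle : k i - k j ≤ (k i - k t) + (k t - k j) := by omega
      calc (X : Polynomial K) ^ (k i - k j)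
          ∣ (X : Polynomial K) ^ ((k i - k t) + (k t - k j)) := pow_dvd_pow _ hle
        _ = X ^ (k i - k t) * X ^ (k t - k j) := pow_add _ _ _
        _ ∣ P i t * Q t j := mul_dvd_mul h1 h2
    simpa [Matrix.mul_apply] using Finset.dvd_sum fun t _ => this t
  add_mem' := by
    intro P Q hP hQ i j
    simpa using dvd_add (hP i j) (hQ i j)
  one_mem' := by
    intro i j
    by_cases h : i = j
    · subst h; simp [Matrix.one_apply]
    · simp [Matrix.one_apply, h]
  zero_mem' := by intro i j; simp
  algebraMap_mem' := by
    intro c i j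
    by_cases h : i = j
    · subst h; simp [Matrix.algebraMap_matrix_apply]
    · simp [Matrix.algebraMap_matrix_apply, h]


open Polynomial

section Aux

variable {K : Type*} [Field K] {d m : ℕ} {k : Fin m → ℕ}
  (f : Module.End K (Fin d → K))
  (x : Fin m → (Fin d → K))
  (b : Module.Basis ((γ : Fin m) × Fin (k γ)) K (Fin d → K))

lemma fpow_eq_zero (hzero : ∀ γ, (f ^ (k γ)) (x γ) = 0)
    (i : Fin m) {s : ℕ} (hs : k i ≤ s) : (f ^ s) (x i) = 0 := by
  have h : f ^ s = f ^ (s - k i) * f ^ (k i) := by rw [← pow_add]; congr 1; omega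
  rw [h, Module.End.mul_apply, hzero, map_zero]

lemma f_aeval (p : Polynomial K) (v : Fin d → K) :
    f ((aeval f p) v) = (aeval f ((X : K[X]) * p)) v := by
  rw [map_mul, aeval_X, Module.End.mul_apply]

lemma fpow_aeval (n : ℕ) (p : Polynomial K) (v : Fin d → K) :
    (f ^ n) ((aeval f p) v) = (aeval f ((X : K[X]) ^ n * p)) v := by
  rw [map_mul, map_pow, aeval_X, Module.End.mul_apply]

lemma aeval_eq_zero_of_dvd (hzero : ∀ γ, (f ^ (k γ)) (x γ) = 0)
    (i : Fin m) {p : K[X]} (hp : (X : K[X]) ^ (k i) ∣ p) :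
    (aeval f p) (x i) = 0 := by
  obtain ⟨r, rfl⟩ := hp
  rw [mul_comm, map_mul, map_pow, aeval_X, Module.End.mul_apply, hzero, map_zero]

lemma rep_aeval (hzero : ∀ γ, (f ^ (k γ)) (x γ) = 0)
    (hb : ∀ p : (γ : Fin m) × Fin (k γ), b p = (f ^ ((p.2 : ℕ))) (x p.1))
    (i : Fin m) (p : K[X]) :
    (aeval f p) (x i) = ∑ s : Fin (k i), p.coeff s • b ⟨i, s⟩ := by
  have h1 : (aeval f p) (x i)
      = ∑ s ∈ Finset.range (p.natDegree + 1 + k i), p.coeff s • (f ^ s) (x i) := by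
    rw [aeval_eq_sum_range' (by omega : p.natDegree < p.natDegree + 1 + k i)]
    simp
  have h2 : ∑ s ∈ Finset.range (k i), p.coeff s • (f ^ s) (x i)
      = ∑ s ∈ Finset.range (p.natDegree + 1 + k i), p.coeff s • (f ^ s) (x i) := by
    apply Finset.sum_subset
    · exact Finset.range_subset_range.2 (by omega)
    · intro s _ hs
      rw [fpow_eq_zero f x hzero i (by simpa using hs), smul_zero]
  rw [h1, ← h2, ← Fin.sum_univ_eq_sum_range (fun s => p.coeff s • (f ^ s) (x i)) (k i)]
  exact Finset.sum_congr rfl fun s _ => by rw [hb ⟨i, s⟩]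

lemma indep (hzero : ∀ γ, (f ^ (k γ)) (x γ) = 0)
    (hb : ∀ p : (γ : Fin m) × Fin (k γ), b p = (f ^ ((p.2 : ℕ))) (x p.1))
    (p : Fin m → K[X]) :
    (∑ i, (aeval f (p i)) (x i)) = 0 ↔ ∀ i, (X : K[X]) ^ (k i) ∣ p i := by
  have h : ∑ i, (aeval f (p i)) (x i)
      = ∑ q : (γ : Fin m) × Fin (k γ), (p q.1).coeff (q.2 : ℕ) • b q := by
    rw [← Finset.univ_sigma_univ, Finset.sum_sigma]
    exact Finset.sum_congr rfl fun i _ => rep_aeval f x b hzero hb i (p i)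
  rw [h]
  constructor
  · intro h0 i
    rw [Polynomial.X_pow_dvd_iff]
    intro e he
    exact Fintype.linearIndependent_iff.mp b.linearIndependent
      (fun q => (p q.1).coeff (q.2 : ℕ)) h0 ⟨i, ⟨e, he⟩⟩
  · intro hdvd
    apply Finset.sum_eq_zero
    intro q _
    rw [Polynomial.X_pow_dvd_iff.mp (hdvd q.1) (q.2 : ℕ) q.2.2, zero_smul]

noncomputable def Lmap (P : Matrix (Fin m) (Fin m) (Polynomial K)) :
    Module.End K (Fin d → K) :=
  b.constr K fun q : (γ : Fin m) × Fin (k γ) =>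
    ∑ i, (aeval f ((X : K[X]) ^ (q.2 : ℕ) * P i q.1)) (x i)

lemma Lmap_basis (P : Matrix (Fin m) (Fin m) (Polynomial K))
    (q : (γ : Fin m) × Fin (k γ)) :
    Lmap f x b P (b q) = ∑ i, (aeval f ((X : K[X]) ^ (q.2 : ℕ) * P i q.1)) (x i) :=
  b.constr_basis K _ q

lemma Lmap_aeval (hzero : ∀ γ, (f ^ (k γ)) (x γ) = 0)
    (hb : ∀ p : (γ : Fin m) × Fin (k γ), b p = (f ^ ((p.2 : ℕ))) (x p.1))
    (P : Matrix (Fin m) (Fin m) (Polynomial K))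
    (hP : ∀ i j, (X : K[X]) ^ (k i - k j) ∣ P i j)
    (j : Fin m) (q : K[X]) :
    Lmap f x b P ((aeval f q) (x j)) = ∑ i, (aeval f (q * P i j)) (x i) := by
  induction q using Polynomial.induction_on' with
  | add p r hp hr =>
    rw [map_add, LinearMap.add_apply, map_add, hp, hr, ← Finset.sum_add_distrib]
    exact Finset.sum_congr rfl fun i _ => by rw [add_mul, map_add]; rfl
  | monomial n a =>
    have hm : ((monomial n) a : K[X]) = C a * X ^ n := (C_mul_X_pow_eq_monomial).symm
    have h1 : (aeval f (C a * X ^ n)) (x j) = a • (f ^ n) (x j) := by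
      rw [map_mul, aeval_C, map_pow, aeval_X, Module.End.mul_apply,
        Module.algebraMap_end_apply]
    by_cases hn : n < k j
    · have hbq : (f ^ n) (x j) = b ⟨j, ⟨n, hn⟩⟩ := (hb ⟨j, ⟨n, hn⟩⟩).symm
      rw [hm, h1, hbq, map_smul, Lmap_basis, Finset.smul_sum]
      refine Finset.sum_congr rfl fun i _ => ?_
      rw [mul_assoc, ← Polynomial.smul_eq_C_mul, map_smul, LinearMap.smul_apply]
    · have h0 : (f ^ n) (x j) = 0 := fpow_eq_zero f x hzero j (by omega)
      rw [hm, h1, h0, smul_zero, map_zero]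
      symm; apply Finset.sum_eq_zero
      intro i _
      apply aeval_eq_zero_of_dvd f x hzero
      obtain ⟨r, hr⟩ := hP i j
      rw [mul_assoc]
      refine Dvd.dvd.mul_left ?_ (C a)
      rw [hr, ← mul_assoc, ← pow_add]
      exact Dvd.dvd.mul_right (pow_dvd_pow X (by omega)) r

end Aux


theorem stmt15 {K : Type*} [Field K] {d m : ℕ} (A : Matrix (Fin d) (Fin d) K)
    (hA : IsNilpotent A) (k : Fin m → ℕ) (hk1 : ∀ i, 1 ≤ k i)
    (hmono : ∀ i j : Fin m, i ≤ j → k j ≤ k i)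
    (x : Fin m → (Fin d → K))
    (hzero : ∀ γ, ((Matrix.toLin' A) ^ (k γ)) (x γ) = 0)
    (b : Module.Basis ((γ : Fin m) × Fin (k γ)) K (Fin d → K))
    (hb : ∀ p : (γ : Fin m) × Fin (k γ), b p = ((Matrix.toLin' A) ^ ((p.2 : ℕ))) (x p.1)) :
    ∃ Θ : NX k →ₐ[K] Subalgebra.centralizer K ({A} : Set (Matrix (Fin d) (Fin d) K)),
      Function.Surjective Θ ∧
      ∀ P : NX k, Θ P = 0 ↔
        ∀ i j, (X : Polynomial K) ^ (k i) ∣ P.val i j := by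
  classical
  set f : Module.End K (Fin d → K) := Matrix.toLin' A with hf
  have mem_NX : ∀ P : Matrix (Fin m) (Fin m) (Polynomial K),
      P ∈ NX k ↔ ∀ i j, (X : K[X]) ^ (k i - k j) ∣ P i j := fun P => Iff.rfl
  have hbX : ∀ q : (γ : Fin m) × Fin (k γ),
      b q = (aeval f ((X : K[X]) ^ (q.2 : ℕ))) (x q.1) := by
    intro q; rw [hb, map_pow, aeval_X]
  have key : ∀ (P : NX k) (j : Fin m) (q : K[X]),
      Lmap f x b P.val ((aeval f q) (x j)) = ∑ i, (aeval f (q * P.val i j)) (x i) :=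
    fun P j q => Lmap_aeval f x b hzero hb P.val ((mem_NX P.val).mp P.2) j q
  have hcomm : ∀ P : NX k, f ∘ₗ Lmap f x b P.val = Lmap f x b P.val ∘ₗ f := by
    intro P
    apply b.ext
    intro q
    simp only [LinearMap.comp_apply]
    have h1 : f ((Lmap f x b P.val) (b q))
        = ∑ i, (aeval f ((X : K[X]) * (X ^ (q.2 : ℕ) * P.val i q.1))) (x i) := by
      rw [Lmap_basis, map_sum]
      exact Finset.sum_congr rfl fun i _ => f_aeval f _ _
    have h2 : (Lmap f x b P.val) (f (b q))
        = ∑ i, (aeval f (((X : K[X]) * X ^ (q.2 : ℕ)) * P.val i q.1)) (x i) := by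
      rw [hbX q, f_aeval, key]
    rw [h1, h2]
    exact Finset.sum_congr rfl fun i _ =>
      congrArg (fun p => (aeval f p) (x i)) (by ring)
  have hA' : LinearMap.toMatrix' f = A := LinearMap.toMatrix'_toLin' A
  have hmem : ∀ P : NX k,
      LinearMap.toMatrix' (Lmap f x b P.val) ∈
        Subalgebra.centralizer K ({A} : Set (Matrix (Fin d) (Fin d) K)) := by
    intro P
    rw [Subalgebra.mem_centralizer_iff]
    rintro g hg
    rw [Set.mem_singleton_iff] at hg; subst hg
    rw [← hA', ← LinearMap.toMatrix'_comp, ← LinearMap.toMatrix'_comp, hcomm P]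
  refine ⟨{ toFun := fun P => ⟨LinearMap.toMatrix' (Lmap f x b P.val), hmem P⟩,
            map_one' := ?_, map_mul' := ?_, map_zero' := ?_, map_add' := ?_,
            commutes' := ?_ }, ?_, ?_⟩
  · -- map_one
    apply Subtype.ext
    show LinearMap.toMatrix' (Lmap f x b (1 : NX (K := K) k).val) = 1
    rw [← LinearMap.toMatrix'_id (R := K) (n := Fin d)]
    congr 1
    apply b.ext
    intro q
    rw [Lmap_basis, Finset.sum_eq_single q.1]
    · have h1 : ((1 : NX (K := K) k).val) q.1 q.1 = 1 := by
        rw [show ((1 : NX (K := K) k).val) = (1 : Matrix (Fin m) (Fin m) (Polynomial K)) from rfl]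
        exact Matrix.one_apply_eq q.1
      rw [h1, mul_one, LinearMap.id_apply, hbX q]
    · intro t _ ht
      have h0 : ((1 : NX (K := K) k).val) t q.1 = 0 := by
        rw [show ((1 : NX (K := K) k).val) = (1 : Matrix (Fin m) (Fin m) (Polynomial K)) from rfl]
        exact Matrix.one_apply_ne ht
      rw [h0, mul_zero, map_zero, LinearMap.zero_apply]
    · intro h; exact absurd (Finset.mem_univ q.1) h
  · -- map_mul
    intro P Q
    apply Subtype.ext
    show LinearMap.toMatrix' (Lmap f x b (P * Q).val)
        = LinearMap.toMatrix' (Lmap f x b P.val) * LinearMap.toMatrix' (Lmap f x b Q.val)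
    rw [← LinearMap.toMatrix'_comp]
    congr 1
    apply b.ext
    intro q
    simp only [LinearMap.comp_apply]
    rw [Lmap_basis, Lmap_basis, map_sum]
    have hR : ∀ i, Lmap f x b P.val ((aeval f ((X : K[X]) ^ (q.2 : ℕ) * Q.val i q.1)) (x i))
        = ∑ t, (aeval f (((X : K[X]) ^ (q.2 : ℕ) * Q.val i q.1) * P.val t i)) (x t) :=
      fun i => key P i _
    rw [Finset.sum_congr rfl fun i _ => hR i, Finset.sum_comm]
    refine Finset.sum_congr rfl fun t _ => ?_
    have hmulval : (P * Q).val t q.1 = ∑ i, P.val t i * Q.val i q.1 := by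
      rw [show (P * Q).val = P.val * Q.val from rfl, Matrix.mul_apply]
    rw [hmulval, Finset.mul_sum, map_sum, LinearMap.sum_apply]
    refine Finset.sum_congr rfl fun i _ => ?_
    exact congrArg (fun p => (aeval f p) (x t)) (by ring)
  · -- map_zero
    apply Subtype.ext
    show LinearMap.toMatrix' (Lmap f x b (0 : NX (K := K) k).val) = 0
    have h : Lmap f x b (0 : NX (K := K) k).val = 0 := by
      apply b.ext; intro q
      rw [Lmap_basis]
      simp [show ((0 : NX (K := K) k).val) = (0 : Matrix (Fin m) (Fin m) (Polynomial K)) from rfl]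
    rw [h, LinearMap.toMatrix'.map_zero]
  · -- map_add
    intro P Q
    apply Subtype.ext
    show LinearMap.toMatrix' (Lmap f x b (P + Q).val)
        = LinearMap.toMatrix' (Lmap f x b P.val) + LinearMap.toMatrix' (Lmap f x b Q.val)
    have h : Lmap f x b (P + Q).val = Lmap f x b P.val + Lmap f x b Q.val := by
      apply b.ext; intro q
      rw [LinearMap.add_apply, Lmap_basis, Lmap_basis, Lmap_basis, ← Finset.sum_add_distrib]
      refine Finset.sum_congr rfl fun i _ => ?_
      rw [show (P + Q).val i q.1 = P.val i q.1 + Q.val i q.1 from rfl, mul_add, map_add,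
        LinearMap.add_apply]
    rw [h, map_add]
  · -- commutes
    intro c
    apply Subtype.ext
    show LinearMap.toMatrix' (Lmap f x b ((algebraMap K (NX (K := K) k)) c).val)
        = ((algebraMap K (Subalgebra.centralizer K ({A} : Set (Matrix (Fin d) (Fin d) K)))) c).val
    have hval : ((algebraMap K (NX (K := K) k)) c).val
        = (algebraMap K (Matrix (Fin m) (Fin m) (Polynomial K))) c := rfl
    have h : Lmap f x b ((algebraMap K (NX (K := K) k)) c).val = c • LinearMap.id := by
      apply b.ext; intro q
      rw [Lmap_basis, Finset.sum_eq_single q.1]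
      · rw [hval, Matrix.algebraMap_matrix_apply, if_pos rfl,
          show (algebraMap K (Polynomial K)) c = C c from rfl, mul_comm,
          ← Polynomial.smul_eq_C_mul, map_smul, LinearMap.smul_apply,
          LinearMap.smul_apply, LinearMap.id_apply, hbX q]
      · intro t _ ht
        rw [hval, Matrix.algebraMap_matrix_apply, if_neg ht, mul_zero, map_zero,
          LinearMap.zero_apply]
      · intro h; exact absurd (Finset.mem_univ q.1) h
    rw [h, map_smul, LinearMap.toMatrix'_id]
    rw [show ((algebraMap K (Subalgebra.centralizer K ({A} : Set (Matrix (Fin d) (Fin d) K)))) c).val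
        = (algebraMap K (Matrix (Fin d) (Fin d) K)) c from rfl]
    rw [Algebra.algebraMap_eq_smul_one]
  · -- surjective
    simp only [AlgHom.coe_mk, RingHom.coe_mk, MonoidHom.coe_mk, OneHom.coe_mk,
      Function.Surjective]
    rintro ⟨B, hB⟩
    have hAB : A * B = B * A := by
      rw [Subalgebra.mem_centralizer_iff] at hB
      exact hB A rfl
    set g : Module.End K (Fin d → K) := Matrix.toLin' B with hg
    have hc : Commute f g := by
      show f * g = g * f
      rw [Module.End.mul_eq_comp, Module.End.mul_eq_comp, hf, hg,
        ← Matrix.toLin'_mul, ← Matrix.toLin'_mul, hAB]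
    have hswap : ∀ (n : ℕ) (v : Fin d → K), (f ^ n) (g v) = g ((f ^ n) v) := by
      intro n v
      have h := hc.pow_left n
      calc (f ^ n) (g v) = (f ^ n * g) v := rfl
        _ = (g * f ^ n) v := by rw [h]
        _ = g ((f ^ n) v) := rfl
    set P : Matrix (Fin m) (Fin m) (Polynomial K) :=
      Matrix.of fun i j => ∑ s : Fin (k i), C (b.repr (g (x j)) ⟨i, s⟩) * X ^ (s : ℕ)
      with hPdef
    have claim1 : ∀ j, ∑ i, (aeval f (P i j)) (x i) = g (x j) := by
      intro j
      have h : ∀ i, (aeval f (P i j)) (x i)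
          = ∑ s : Fin (k i), b.repr (g (x j)) ⟨i, s⟩ • b ⟨i, s⟩ := by
        intro i
        rw [hPdef]
        show (aeval f (∑ s : Fin (k i), C (b.repr (g (x j)) ⟨i, s⟩) * X ^ (s : ℕ))) (x i) = _
        rw [map_sum, LinearMap.sum_apply]
        refine Finset.sum_congr rfl fun s _ => ?_
        rw [map_mul, aeval_C, map_pow, aeval_X, Module.End.mul_apply,
          Module.algebraMap_end_apply, hb ⟨i, s⟩]
      rw [Finset.sum_congr rfl fun i _ => h i, ← Finset.sum_sigma (Finset.univ)
        (fun _ => Finset.univ) (fun q => b.repr (g (x j)) q • b q),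
        Finset.univ_sigma_univ, Module.Basis.sum_repr]
    have claim2 : P ∈ NX k := by
      rw [mem_NX]
      intro i j
      have h0 : ∑ t, (aeval f ((X : K[X]) ^ (k j) * P t j)) (x t) = 0 := by
        rw [Finset.sum_congr rfl fun t _ => (fpow_aeval f (k j) (P t j) (x t)).symm,
          ← map_sum, claim1 j, hswap, hzero, map_zero]
      have hdvd := (indep f x b hzero hb (fun t => X ^ (k j) * P t j)).mp h0 i
      by_cases hij : k i ≤ k j
      · rw [Nat.sub_eq_zero_of_le hij, pow_zero]
        exact one_dvd _
      · obtain ⟨r, hr⟩ := hdvd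
        have hne : (X : K[X]) ^ (k j) ≠ 0 := pow_ne_zero _ X_ne_zero
        have h2 : (X : K[X]) ^ (k j) * P i j = X ^ (k j) * (X ^ (k i - k j) * r) := by
          rw [hr, ← mul_assoc, ← pow_add]
          congr 2
          omega
        exact ⟨r, mul_left_cancel₀ hne h2⟩
    refine ⟨⟨P, claim2⟩, ?_⟩
    apply Subtype.ext
    show LinearMap.toMatrix' (Lmap f x b P) = B
    have h : Lmap f x b P = g := by
      apply b.ext; intro q
      rw [Lmap_basis,
        Finset.sum_congr rfl fun i _ => (fpow_aeval f ((q.2 : ℕ)) (P i q.1) (x i)).symm,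
        ← map_sum, claim1, hswap, ← hb q]
    rw [h, hg, LinearMap.toMatrix'_toLin']
  · -- kernel
    simp only [AlgHom.coe_mk, RingHom.coe_mk, MonoidHom.coe_mk, OneHom.coe_mk]
    intro P
    constructor
    · intro h0 i j
      have hL : Lmap f x b P.val = 0 := by
        have hval : LinearMap.toMatrix' (Lmap f x b P.val) = 0 := by
          have := congrArg Subtype.val h0
          rwa [ZeroMemClass.coe_zero] at this
        exact (LinearEquiv.map_eq_zero_iff LinearMap.toMatrix').mp hval
      have h1 : Lmap f x b P.val (b ⟨j, ⟨0, hk1 j⟩⟩) = 0 := by rw [hL]; rfl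
      rw [Lmap_basis] at h1
      simp only [pow_zero, one_mul] at h1
      exact (indep f x b hzero hb (fun t => P.val t j)).mp h1 i
    · intro hdvd
      apply Subtype.ext
      show LinearMap.toMatrix' (Lmap f x b P.val) = _
      have h : Lmap f x b P.val = 0 := by
        apply b.ext; intro q
        rw [Lmap_basis, LinearMap.zero_apply]
        apply Finset.sum_eq_zero
        intro i _
        exact aeval_eq_zero_of_dvd f x hzero i (Dvd.dvd.mul_left (hdvd i q.1) _)
      rw [h, LinearMap.toMatrix'.map_zero]
      rfl
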